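/- The trivial (GZ) approximator is an ndao: for a map IC : 𝒫(A) → 𝒫(𝒫(A))∖{∅} on a finite set of atoms A, define 𝒪(x,y) = (IC(x), IC(x)) if x = y and 𝒪(x,y) = ({∅}, {A}) otherwise (for x ⊆ y ⊆ A). Then 𝒪 is ≼^A_i-monotonic on consistent pairs and exact, hence an ndao approximating IC. -/
import Mathlib


open scoped Classical

def smyth {L : Type*} [Lattice L] (X Y : Set L) : Prop :=
  ∀ y ∈ Y, ∃ x ∈ X, x ≤ y

def hoare {L : Type*} [Lattice L] (X Y : Set L) : Prop :=
  ∀ x ∈ X, ∃ y ∈ Y, x ≤ y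

noncomputable def GZl {A : Type*} (IC : Set A → Set (Set A)) (x y : Set A) :
    Set (Set A) :=
  if x = y then IC x else {∅}

noncomputable def GZu {A : Type*} (IC : Set A → Set (Set A)) (x y : Set A) :
    Set (Set A) :=
  if x = y then IC x else {Set.univ}

theorem GZ_is_ndao {A : Type*} [Fintype A] (IC : Set A → Set (Set A))
    (hne : ∀ z : Set A, (IC z).Nonempty) :
    (∀ x₁ y₁ x₂ y₂ : Set A, x₁ ⊆ y₁ → x₂ ⊆ y₂ → x₁ ⊆ x₂ → y₂ ⊆ y₁ →
      smyth (GZl IC x₁ y₁) (GZl IC x₂ y₂) ∧ hoare (GZu IC x₂ y₂) (GZu IC x₁ y₁)) ∧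
    (∀ x : Set A, GZl IC x x = IC x ∧ GZu IC x x = IC x) := by
  constructor
  · intro x₁ y₁ x₂ y₂ h11 h22 hx hy
    by_cases h1 : x₁ = y₁
    · subst h1
      have hx2 : x₂ = y₂ := subset_antisymm h22 (hy.trans hx)
      have hall : x₁ = x₂ := subset_antisymm hx (h22.trans hy)
      subst hx2; subst hall
      constructor
      · intro y hy'; exact ⟨y, hy', le_rfl⟩
      · intro y hy'; exact ⟨y, hy', le_rfl⟩
    · constructor
      · intro y _
        refine ⟨∅, ?_, Set.empty_subset y⟩
        simp [GZl, h1]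
      · intro x _
        refine ⟨Set.univ, ?_, Set.subset_univ x⟩
        simp [GZu, h1]
  · intro x
    constructor <;> simp [GZl, GZu]
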